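/- arXiv:2605.29816 — 2 statements merged into one kernel-verified Lean document; each statement's English description precedes it below -/
import Mathlib

section
/- Let X be a real random variable with X ∈ [-c,c] almost surely, mean μ, and variance ν. Set γ = (2/3)cκ for κ > 0 and ξ_B = γ + √(γ² + 2κν). If ρ ≥ -μ + ξ_B, then P(X ≤ -ρ) ≤ e^{-κ}. -/
open Real MeasureTheory ProbabilityTheory

/-- On `[0, 3/2]` the exponential is bounded by `1 + 2k + (8/9)k²`. -/
lemma exp_aux_bmc (k : ℝ) (h0 : 0 ≤ k) (h1 : k ≤ 3/2) :
    Real.exp k ≤ 1 + 2*k + 8/9*k^2 := by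
  have hx0 : 0 ≤ k/2 := by linarith
  have hx1 : k/2 ≤ 1 := by linarith
  have h := Real.exp_bound' hx0 hx1 (n := 4) (by norm_num)
  norm_num [Finset.sum_range_succ, Nat.factorial] at h
  have hk : Real.exp k = Real.exp (k/2) * Real.exp (k/2) := by
    rw [← Real.exp_add]; ring_nf
  rw [hk]
  have hnn : 0 < Real.exp (k/2) := Real.exp_pos _
  have hQ0 : (0:ℝ) ≤ 1 + k/2 + (k/2)^2/2 + (k/2)^3/6 + (k/2)^4*5/96 := by positivity
  have h2 : Real.exp (k/2) * Real.exp (k/2)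
      ≤ (1 + k/2 + (k/2)^2/2 + (k/2)^3/6 + (k/2)^4*5/96) ^ 2 := by
    rw [sq]; exact mul_le_mul h h hnn.le hQ0
  refine h2.trans ?_
  set x := k/2 with hxdef
  have hx34 : x ≤ 3/4 := by rw [hxdef]; linarith
  have hkx : k = 2*x := by rw [hxdef]; ring
  rw [hkx]
  nlinarith [mul_nonneg (mul_nonneg hx0 hx0) hx0, sq_nonneg x,
    mul_nonneg (mul_nonneg (mul_nonneg hx0 hx0) hx0) hx0,
    mul_nonneg (sq_nonneg x) (sub_nonneg.2 hx34),
    mul_nonneg (mul_nonneg (sq_nonneg x) hx0) (sub_nonneg.2 hx34),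
    mul_nonneg (mul_nonneg (sq_nonneg x) (sq_nonneg x)) (sub_nonneg.2 hx34),
    mul_nonneg (mul_nonneg (mul_nonneg (sq_nonneg x) (sq_nonneg x)) hx0) (sub_nonneg.2 hx34),
    mul_nonneg (mul_nonneg (mul_nonneg (sq_nonneg x) (sq_nonneg x)) (sq_nonneg x)) (sub_nonneg.2 hx34),
    mul_nonneg (mul_nonneg (mul_nonneg (mul_nonneg (sq_nonneg x) (sq_nonneg x)) (sq_nonneg x)) hx0) (sub_nonneg.2 hx34)]

/-- Bernstein-based margin certificate: if `X ∈ [-c, c]` almost surely with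
mean `μX` and variance `ν`, and with `γ = (2/3) c κ`,
`ξ_B = γ + √(γ² + 2κν)`, the condition `ρ ≥ -μX + ξ_B` implies
`P(X ≤ -ρ) ≤ e^{-κ}`. -/
theorem bernstein_margin_certificate
    {Ω : Type*} [MeasureSpace Ω] (μ : Measure Ω) [IsProbabilityMeasure μ]
    (X : Ω → ℝ) (hX : Measurable X)
    (c : ℝ) (hc : 0 < c) (hbdd : ∀ᵐ ω ∂μ, X ω ∈ Set.Icc (-c) c)
    (μX : ℝ) (hμX : μX = ∫ ω, X ω ∂μ)
    (ν : ℝ) (hν : ν = variance X μ)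
    (κ : ℝ) (hκ : 0 < κ)
    (γ : ℝ) (hγ : γ = 2 / 3 * c * κ)
    (ξB : ℝ) (hξB : ξB = γ + Real.sqrt (γ ^ 2 + 2 * κ * ν))
    (ρ : ℝ) (hρ : -μX + ξB ≤ ρ) :
    (μ {ω | X ω ≤ -ρ}).toReal ≤ Real.exp (-κ) := by
  have hνnn : 0 ≤ ν := hν ▸ variance_nonneg X μ
  have hγpos : 0 < γ := by rw [hγ]; positivity
  have hsq : Real.sqrt (γ ^ 2 + 2 * κ * ν) ^ 2 = γ ^ 2 + 2 * κ * ν :=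
    Real.sq_sqrt (by positivity)
  have hsγ : γ ≤ Real.sqrt (γ ^ 2 + 2 * κ * ν) :=
    (Real.le_sqrt' hγpos).mpr (by nlinarith)
  have hξpos : 0 < ξB := by
    have := Real.sqrt_nonneg (γ ^ 2 + 2 * κ * ν); rw [hξB]; linarith
  -- integrability
  have hmem : MemLp X 2 μ := by
    refine MemLp.of_bound hX.aestronglyMeasurable c ?_
    filter_upwards [hbdd] with ω h
    rw [Real.norm_eq_abs]; exact abs_le.2 ⟨h.1, h.2⟩
  have hint : Integrable X μ := hmem.integrable one_le_two
  have hint2 : Integrable (fun ω => X ω ^ 2) μ := by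
    simpa [sq] using hmem.integrable_sq
  have hEX2 : (∫ ω, X ω ^ 2 ∂μ) = ν + μX ^ 2 := by
    have := variance_eq_sub hmem
    rw [hν, hμX]
    simp only [Pi.pow_apply] at this
    linarith [this]
  by_cases hcase : ρ ≤ c
  case neg =>
    -- the event is null
    have hnull : μ {ω | X ω ≤ -ρ} = 0 := by
      rw [measure_eq_zero_iff_ae_notMem]
      filter_upwards [hbdd] with ω h
      simp only [Set.mem_setOf_eq, not_le]
      have : -c ≤ X ω := h.1
      push_neg at hcase
      linarith
    rw [hnull]
    simp [Real.exp_pos, (Real.exp_pos (-κ)).le]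
  case pos =>
    -- mean bounds
    have hμXc : μX ≤ c := by
      rw [hμX]
      calc (∫ ω, X ω ∂μ) ≤ ∫ _, c ∂μ := by
            refine integral_mono_ae hint (integrable_const c) ?_
            filter_upwards [hbdd] with ω h using h.2
        _ = c := by simp
    have hνc : ν ≤ c ^ 2 := by
      have hX2c : (∫ ω, X ω ^ 2 ∂μ) ≤ c ^ 2 := by
        calc (∫ ω, X ω ^ 2 ∂μ) ≤ ∫ _, c ^ 2 ∂μ := by
              refine integral_mono_ae hint2 (integrable_const _) ?_
              filter_upwards [hbdd] with ω h
              exact sq_le_sq' (by linarith [h.1]) h.2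
          _ = c ^ 2 := by simp
      nlinarith [hEX2, sq_nonneg μX]
    -- κ ≤ 3/2
    have hκ32 : κ ≤ 3/2 := by
      have h2γ : 2 * γ ≤ ξB := by rw [hξB]; linarith
      have : ξB ≤ μX + ρ := by linarith
      have : 2 * (2/3 * c * κ) ≤ 2 * c := by
        rw [← hγ]; linarith
      nlinarith
    -- key inequality from exp bound
    have hkey : ν * (Real.exp κ - 1) ≤ ξB ^ 2 := by
      have hexp := exp_aux_bmc κ hκ.le hκ32
      have hξsq : 2 * γ ^ 2 + 2 * κ * ν ≤ ξB ^ 2 := by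
        rw [hξB]
        nlinarith [hsq, hsγ, Real.sqrt_nonneg (γ ^ 2 + 2 * κ * ν)]
      have h89 : ν * (8/9 * κ^2) ≤ c^2 * (8/9 * κ^2) := by
        apply mul_le_mul_of_nonneg_right hνc (by positivity)
      have : 2 * γ ^ 2 = 8/9 * κ^2 * c^2 := by rw [hγ]; ring
      nlinarith [mul_le_mul_of_nonneg_left (sub_le_iff_le_add.mpr hexp) hνnn]
    -- Cantelli via Markov
    set t := μX + ρ with ht_def
    have htξ : ξB ≤ t := by rw [ht_def]; linarith
    have htpos : 0 < t := lt_of_lt_of_le hξpos htξ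
    set u := ν / t with hu_def
    have hunn : 0 ≤ u := by positivity
    have hf_int : Integrable (fun ω => (μX + u - X ω) ^ 2) μ := by
      have : (fun ω => (μX + u - X ω) ^ 2)
          = fun ω => X ω ^ 2 - (2 * (μX + u)) * X ω + (μX + u) ^ 2 := by
        funext ω; ring
      rw [this]
      exact (hint2.sub (hint.const_mul _)).add (integrable_const _)
    have hf_eq : (∫ ω, (μX + u - X ω) ^ 2 ∂μ) = ν + u ^ 2 := by
      have he : (fun ω => (μX + u - X ω) ^ 2)
          = fun ω => X ω ^ 2 - (2 * (μX + u)) * X ω + (μX + u) ^ 2 := by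
        funext ω; ring
      rw [he, integral_add
          (show Integrable (fun ω => X ω ^ 2 - 2 * (μX + u) * X ω) μ from
            hint2.sub (hint.const_mul _)) (integrable_const _),
        integral_sub hint2
          (show Integrable (fun ω => 2 * (μX + u) * X ω) μ from hint.const_mul _),
        integral_const_mul, integral_const]
      simp only [measure_univ, probReal_univ, ENNReal.toReal_one, smul_eq_mul, one_mul, mul_one]
      rw [hEX2, ← hμX]; ring
    have hM := mul_meas_ge_le_integral_of_nonneg
      (ae_of_all μ fun ω => sq_nonneg (μX + u - X ω)) hf_int ((t + u) ^ 2)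
    rw [hf_eq] at hM
    set P := (μ {ω | X ω ≤ -ρ}).toReal with hP_def
    have hPnn : 0 ≤ P := ENNReal.toReal_nonneg
    have hsub : {ω | X ω ≤ -ρ} ⊆ {ω | (t + u) ^ 2 ≤ (μX + u - X ω) ^ 2} := by
      intro ω hω
      simp only [Set.mem_setOf_eq] at hω ⊢
      have h1 : t + u ≤ μX + u - X ω := by rw [ht_def]; linarith
      have h0 : (0:ℝ) ≤ t + u := by positivity
      exact pow_le_pow_left₀ h0 h1 2
    have hmono : P ≤ (μ {ω | (t + u) ^ 2 ≤ (μX + u - X ω) ^ 2}).toReal := by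
      rw [hP_def]
      exact ENNReal.toReal_le_toReal (measure_ne_top μ _) (measure_ne_top μ _)
        |>.mpr (measure_mono hsub)
    have h1 : (t + u) ^ 2 * P ≤ ν + u ^ 2 := by
      refine le_trans ?_ hM
      exact mul_le_mul_of_nonneg_left hmono (by positivity)
    -- clear denominators : P * (ν + t²) ≤ ν
    have htu : t * u = ν := by
      rw [hu_def]; field_simp
    have h2' : (ν + t ^ 2) ^ 2 * P ≤ ν * (ν + t ^ 2) := by
      calc (ν + t ^ 2) ^ 2 * P = t ^ 2 * ((t + u) ^ 2 * P) := by rw [← htu]; ring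
        _ ≤ t ^ 2 * (ν + u ^ 2) := mul_le_mul_of_nonneg_left h1 (sq_nonneg t)
        _ = ν * (ν + t ^ 2) := by rw [← htu]; ring
    have hνt : 0 < ν + t ^ 2 := by positivity
    have hPt : P * (ν + t ^ 2) ≤ ν := by
      have h3 : (P * (ν + t ^ 2)) * (ν + t ^ 2) ≤ ν * (ν + t ^ 2) := by
        calc (P * (ν + t ^ 2)) * (ν + t ^ 2) = (ν + t ^ 2) ^ 2 * P := by ring
          _ ≤ ν * (ν + t ^ 2) := h2'
      exact le_of_mul_le_mul_right h3 hνt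
    -- conclude
    rcases eq_or_lt_of_le hνnn with hν0 | hνpos
    · have hPt2 : P * t ^ 2 ≤ 0 * t ^ 2 := by
        rw [← hν0] at hPt; simpa using hPt
      have hP0 : P ≤ 0 := le_of_mul_le_mul_right hPt2 (by positivity)
      exact le_trans hP0 (Real.exp_pos _).le
    · have h3 : ν * Real.exp κ ≤ ν + ξB ^ 2 := by
        have hkey' := hkey
        ring_nf at hkey' ⊢
        linarith [hkey']
      have h4 : ξB ^ 2 ≤ t ^ 2 := pow_le_pow_left₀ hξpos.le htξ 2
      have h5 : P * (ν * Real.exp κ) ≤ ν :=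
        le_trans (mul_le_mul_of_nonneg_left (by linarith : ν * Real.exp κ ≤ ν + t ^ 2) hPnn) hPt
      have h7 : P ≤ ν / (ν * Real.exp κ) :=
        (le_div_iff₀ (by positivity)).mpr h5
      have h8 : ν / (ν * Real.exp κ) = Real.exp (-κ) := by
        rw [Real.exp_neg]
        field_simp
      linarith [h7, h8.symm.le, h8.le]
end

section
/- Consider a fixed example (x,y) with margin function ρ(·,y) and margin shift f(x,y,δx) = ρ(x+δx,y) - ρ(x,y) satisfying |f(x,y,δx)| ≤ c for δx in a box 𝓑. Let P_D be a perturbation distribution dominated on 𝓑 by the uniform distribution P_u with constants C, V_𝓑, ε_𝓑 (as in the box-domination assumption), let μ_u and ν_u be the mean and variance of f(x,y,δx) under P_u, let φ ∈ (ε_𝓑, 1), κ = ln(C·V_𝓑/(φ - ε_𝓑)), γ = (2/3)cκ, ξ_H = c√(2κ), ξ_B = γ + √(γ² + 2κν_u). If ρ(x,y) > -μ_u + min{ξ_H, ξ_B}, then P_D(ρ(x + δx, y) > 0) ≥ 1 - φ. -/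
open Real MeasureTheory ProbabilityTheory

set_option maxHeartbeats 1000000

lemma two_mul_three_pow_le_factorial (k : ℕ) : 2 * 3 ^ k ≤ (k + 2).factorial := by
  induction k with
  | zero => simp [Nat.factorial]
  | succ k ih =>
      have h1 : (k + 3).factorial = (k + 3) * (k + 2).factorial := rfl
      calc 2 * 3 ^ (k + 1) = 3 * (2 * 3 ^ k) := by ring
        _ ≤ 3 * (k + 2).factorial := by omega
        _ ≤ (k + 3) * (k + 2).factorial := by
            exact Nat.mul_le_mul_right _ (by omega)
        _ = (k + 3).factorial := h1.symm

lemma exp_le_quad {s S : ℝ} (h : |s| ≤ S) (hS : S < 3) :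
    Real.exp s ≤ 1 + s + s ^ 2 / (2 * (1 - S / 3)) := by
  have hS0 : 0 ≤ S := (abs_nonneg s).trans h
  have hden : 0 < 1 - S / 3 := by linarith
  have hsum : Summable (fun n : ℕ => s ^ n / n.factorial) := Real.summable_pow_div_factorial s
  have hexp : Real.exp s = ∑' n : ℕ, s ^ n / n.factorial := by
    rw [Real.exp_eq_exp_ℝ, NormedSpace.exp_eq_tsum_div]
  have hsum1 : Summable (fun n : ℕ => s ^ (n + 1) / (n + 1).factorial) :=
    (summable_nat_add_iff 1).mpr hsum
  have hsum2 : Summable (fun n : ℕ => s ^ (n + 2) / (n + 2).factorial) :=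
    (summable_nat_add_iff 2).mpr hsum
  have h1 : ∑' n : ℕ, s ^ n / n.factorial
      = 1 + (s + ∑' n : ℕ, s ^ (n + 2) / (n + 2).factorial) := by
    rw [Summable.tsum_eq_zero_add hsum]
    simp only [pow_zero, Nat.factorial_zero, Nat.cast_one, div_one]
    congr 1
    rw [Summable.tsum_eq_zero_add hsum1]
    simp [Nat.factorial]
  have hgeo : Summable (fun k : ℕ => s ^ 2 / 2 * (S / 3) ^ k) :=
    (summable_geometric_of_lt_one (by positivity) (by linarith)).mul_left _
  have hterm : ∀ k : ℕ, s ^ (k + 2) / ((k + 2).factorial : ℝ) ≤ s ^ 2 / 2 * (S / 3) ^ k := by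
    intro k
    have hf : (2 * 3 ^ k : ℝ) ≤ ((k + 2).factorial : ℝ) := by
      exact_mod_cast two_mul_three_pow_le_factorial k
    have hnum : s ^ (k + 2) ≤ s ^ 2 * S ^ k := by
      calc s ^ (k + 2) ≤ |s ^ (k + 2)| := le_abs_self _
        _ = |s| ^ 2 * |s| ^ k := by rw [abs_pow]; ring
        _ = s ^ 2 * |s| ^ k := by rw [sq_abs]
        _ ≤ s ^ 2 * S ^ k := by
            exact mul_le_mul_of_nonneg_left (pow_le_pow_left₀ (abs_nonneg s) h k) (sq_nonneg s)
    calc s ^ (k + 2) / ((k + 2).factorial : ℝ) ≤ (s ^ 2 * S ^ k) / (2 * 3 ^ k) := by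
          apply div_le_div₀ (by positivity) hnum (by positivity) hf
      _ = s ^ 2 / 2 * (S / 3) ^ k := by rw [div_pow]; ring
  have htsum : ∑' n : ℕ, s ^ (n + 2) / (n + 2).factorial
      ≤ s ^ 2 / 2 * (1 - S / 3)⁻¹ := by
    calc ∑' n : ℕ, s ^ (n + 2) / ((n + 2).factorial : ℝ)
        ≤ ∑' k : ℕ, s ^ 2 / 2 * (S / 3) ^ k := Summable.tsum_le_tsum hterm hsum2 hgeo
      _ = s ^ 2 / 2 * (1 - S / 3)⁻¹ := by
          rw [tsum_mul_left, tsum_geometric_of_lt_one (by positivity) (by linarith)]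
  have : s ^ 2 / 2 * (1 - S / 3)⁻¹ = s ^ 2 / (2 * (1 - S / 3)) := by
    field_simp
  rw [hexp, h1]
  linarith [htsum, this]


lemma log_hoeffding {p : ℝ} (hp0 : 0 ≤ p) (hp1 : p ≤ 1) {u : ℝ} (hu : 0 ≤ u) :
    Real.log (1 - p + p * Real.exp u) ≤ p * u + u ^ 2 / 8 := by
  have hD : ∀ v : ℝ, 0 < 1 - p + p * Real.exp v := by
    intro v
    nlinarith [Real.exp_pos v, mul_nonneg hp0 (Real.exp_pos v).le,
      mul_nonneg (sub_nonneg.2 hp1) (Real.exp_pos v).le]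
  set G : ℝ → ℝ := fun v => p + v / 4 - p * Real.exp v / (1 - p + p * Real.exp v) with hGdef
  have hDd : ∀ v : ℝ, HasDerivAt (fun w : ℝ => 1 - p + p * Real.exp w) (p * Real.exp v) v := by
    intro v
    exact ((Real.hasDerivAt_exp v).const_mul p).const_add (1 - p)
  have hF : ∀ v : ℝ, HasDerivAt
      (fun w : ℝ => p * w + w ^ 2 / 8 - Real.log (1 - p + p * Real.exp w)) (G v) v := by
    intro v
    have h1 : HasDerivAt (fun w : ℝ => p * w) p v := by
      simpa using (hasDerivAt_id v).const_mul p
    have h2 : HasDerivAt (fun w : ℝ => w ^ 2 / 8) (v / 4) v := by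
      have := (hasDerivAt_pow 2 v).div_const 8
      refine this.congr_deriv ?_
      ring
    have h3 : HasDerivAt (fun w : ℝ => Real.log (1 - p + p * Real.exp w))
        (p * Real.exp v / (1 - p + p * Real.exp v)) v := (hDd v).log (hD v).ne'
    exact (h1.add h2).sub h3
  have hG : ∀ v : ℝ, HasDerivAt G
      (1 / 4 - (p * Real.exp v * (1 - p + p * Real.exp v)
        - p * Real.exp v * (p * Real.exp v)) / (1 - p + p * Real.exp v) ^ 2) v := by
    intro v
    have h3 : HasDerivAt (fun w : ℝ => p * Real.exp w) (p * Real.exp v) v :=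
      (Real.hasDerivAt_exp v).const_mul p
    have hq := h3.div (hDd v) (hD v).ne'
    have h4 : HasDerivAt (fun w : ℝ => p + w / 4) (1 / 4) v := by
      simpa using ((hasDerivAt_id v).div_const 4).const_add p
    exact h4.sub hq
  have hG0 : ∀ v : ℝ, 0 ≤ 1 / 4 - (p * Real.exp v * (1 - p + p * Real.exp v)
      - p * Real.exp v * (p * Real.exp v)) / (1 - p + p * Real.exp v) ^ 2 := by
    intro v
    have hDv := hD v
    rw [sub_nonneg, div_le_iff₀ (by positivity)]
    nlinarith [sq_nonneg (1 - p - p * Real.exp v), Real.exp_pos v]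
  have hGmono : Monotone G :=
    monotone_of_deriv_nonneg (fun v => (hG v).differentiableAt)
      (fun v => by rw [(hG v).deriv]; exact hG0 v)
  have hGzero : G 0 = 0 := by
    simp [hGdef, Real.exp_zero]
  have hGnn : ∀ v : ℝ, 0 ≤ v → 0 ≤ G v := by
    intro v hv
    have := hGmono hv
    rw [hGzero] at this
    exact this
  set F : ℝ → ℝ := fun w => p * w + w ^ 2 / 8 - Real.log (1 - p + p * Real.exp w) with hFdef
  have hFmono : MonotoneOn F (Set.Ici (0 : ℝ)) := by
    apply monotoneOn_of_deriv_nonneg (convex_Ici 0)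
    · exact fun v _ => ((hF v).differentiableAt.continuousAt).continuousWithinAt
    · exact fun v _ => (hF v).differentiableAt.differentiableWithinAt
    · intro v hv
      rw [interior_Ici] at hv
      rw [(hF v).deriv]
      exact hGnn v (le_of_lt hv)
  have hF0 : F 0 = 0 := by
    simp [hFdef]
  have hkey : 0 ≤ F u := by
    have := hFmono Set.self_mem_Ici (show u ∈ Set.Ici (0:ℝ) from hu) hu
    rw [hF0] at this
    exact this
  simp only [hFdef] at hkey
  linarith

lemma hoeffding_combo {p u : ℝ} (hp0 : 0 ≤ p) (hp1 : p ≤ 1) (hu : 0 ≤ u) :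
    (1 - p) * Real.exp (-(p * u)) + p * Real.exp ((1 - p) * u) ≤ Real.exp (u ^ 2 / 8) := by
  have hD : 0 < 1 - p + p * Real.exp u := by
    nlinarith [Real.exp_pos u, mul_nonneg hp0 (Real.exp_pos u).le,
      mul_nonneg (sub_nonneg.2 hp1) (Real.exp_pos u).le]
  have hlog := log_hoeffding hp0 hp1 hu
  have hle : 1 - p + p * Real.exp u ≤ Real.exp (p * u + u ^ 2 / 8) :=
    (Real.log_le_iff_le_exp hD).mp hlog
  have hEq : (1 - p) * Real.exp (-(p * u)) + p * Real.exp ((1 - p) * u)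
      = Real.exp (-(p * u)) * (1 - p + p * Real.exp u) := by
    rw [show (1 - p) * u = u + -(p * u) by ring, Real.exp_add]
    ring
  rw [hEq]
  calc Real.exp (-(p * u)) * (1 - p + p * Real.exp u)
      ≤ Real.exp (-(p * u)) * Real.exp (p * u + u ^ 2 / 8) :=
        mul_le_mul_of_nonneg_left hle (Real.exp_pos _).le
    _ = Real.exp (u ^ 2 / 8) := by rw [← Real.exp_add]; ring_nf


section tails

variable {Ω : Type*} [MeasurableSpace Ω] (P : Measure Ω) [IsProbabilityMeasure P]

lemma tail_hoeffding (Y : Ω → ℝ) (hY : Measurable Y) (a b : ℝ) (hab : a < b)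
    (hbdd : ∀ᵐ ω ∂P, Y ω ∈ Set.Icc a b) (hmean : ∫ ω, Y ω ∂P = 0)
    (lam t : ℝ) (hlam : 0 ≤ lam) :
    (P {ω | t ≤ Y ω}).toReal ≤ Real.exp (-lam * t + lam ^ 2 * (b - a) ^ 2 / 8) := by
  have hYint : Integrable Y P := by
    refine Integrable.mono' (integrable_const (|a| ⊔ |b|)) hY.aestronglyMeasurable ?_
    filter_upwards [hbdd] with ω hω
    rw [Real.norm_eq_abs]
    exact abs_le_max_abs_abs hω.1 hω.2
  have hEint : Integrable (fun ω => Real.exp (lam * Y ω)) P := by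
    refine Integrable.mono' (integrable_const (Real.exp (lam * b)))
      ((hY.const_mul lam).exp).aestronglyMeasurable ?_
    filter_upwards [hbdd] with ω hω
    rw [Real.norm_eq_abs, abs_of_pos (Real.exp_pos _)]
    exact Real.exp_le_exp.2 (mul_le_mul_of_nonneg_left hω.2 hlam)
  have ha : a ≤ 0 := by
    have h := integral_mono_ae (integrable_const a) hYint (by filter_upwards [hbdd] with ω hω using hω.1)
    rw [integral_const, hmean] at h
    simpa using h
  have hb : 0 ≤ b := by
    have h := integral_mono_ae hYint (integrable_const b) (by filter_upwards [hbdd] with ω hω using hω.2)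
    rw [integral_const, hmean] at h
    simpa using h
  have hba : 0 < b - a := sub_pos.2 hab
  -- pointwise convexity
  have hconv : ∀ᵐ ω ∂P, Real.exp (lam * Y ω)
      ≤ (b - Y ω) / (b - a) * Real.exp (lam * a) + (Y ω - a) / (b - a) * Real.exp (lam * b) := by
    filter_upwards [hbdd] with ω hω
    have h1 := convexOn_exp.2 (Set.mem_univ (lam * a)) (Set.mem_univ (lam * b))
      (div_nonneg (sub_nonneg.2 hω.2) hba.le)
      (div_nonneg (sub_nonneg.2 hω.1) hba.le)
      (by rw [← add_div, div_eq_one_iff_eq hba.ne']; ring)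
    have h2 : ((b - Y ω) / (b - a)) • (lam * a) + ((Y ω - a) / (b - a)) • (lam * b)
        = lam * Y ω := by
      simp only [smul_eq_mul]
      field_simp
      ring
    rw [h2] at h1
    simpa [smul_eq_mul] using h1
  -- integrate
  have hrew : (fun ω => (b - Y ω) / (b - a) * Real.exp (lam * a)
        + (Y ω - a) / (b - a) * Real.exp (lam * b))
      = (fun ω => (b / (b - a) * Real.exp (lam * a) + (-a) / (b - a) * Real.exp (lam * b))
        + ((Real.exp (lam * b) - Real.exp (lam * a)) / (b - a)) * Y ω) := by
    funext ω
    field_simp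
    ring
  have hmajInt : Integrable (fun ω => (b - Y ω) / (b - a) * Real.exp (lam * a)
      + (Y ω - a) / (b - a) * Real.exp (lam * b)) P := by
    rw [hrew]
    exact (integrable_const _).add (hYint.const_mul _)
  have hkeyint : ∀ α β : ℝ, ∫ ω, (α + β * Y ω) ∂P = α := by
    intro α β
    have h1 : Integrable (fun ω => β * Y ω) P := hYint.const_mul β
    rw [integral_add (integrable_const α) h1, integral_const, integral_const_mul, hmean]
    simp [measure_univ]
  have hmgf : ∫ ω, Real.exp (lam * Y ω) ∂P ≤ Real.exp (lam ^ 2 * (b - a) ^ 2 / 8) := by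
    have hI := integral_mono_ae hEint hmajInt hconv
    have hIval : ∫ ω, ((b - Y ω) / (b - a) * Real.exp (lam * a)
        + (Y ω - a) / (b - a) * Real.exp (lam * b)) ∂P
        = b / (b - a) * Real.exp (lam * a) + (-a) / (b - a) * Real.exp (lam * b) := by
      rw [hrew, hkeyint]
    rw [hIval] at hI
    set p : ℝ := -a / (b - a) with hpdef
    set v : ℝ := lam * (b - a) with hvdef
    have hp0 : 0 ≤ p := div_nonneg (neg_nonneg.2 ha) hba.le
    have hp1 : p ≤ 1 := by
      rw [hpdef, div_le_one hba]
      linarith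
    have hv0 : 0 ≤ v := mul_nonneg hlam hba.le
    have hcombo := hoeffding_combo hp0 hp1 hv0
    have e1 : lam * a = -(p * v) := by
      rw [hpdef, hvdef]
      field_simp
    have e2 : lam * b = (1 - p) * v := by
      rw [hpdef, hvdef]
      field_simp
      ring
    have e3 : b / (b - a) = 1 - p := by
      rw [hpdef]
      field_simp
      ring
    have e4 : v ^ 2 / 8 = lam ^ 2 * (b - a) ^ 2 / 8 := by
      rw [hvdef]; ring
    rw [e1, e2, e3] at hI
    rw [← e4]
    calc ∫ ω, Real.exp (lam * Y ω) ∂P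
        ≤ (1 - p) * Real.exp (-(p * v)) + p * Real.exp ((1 - p) * v) := hI
      _ ≤ Real.exp (v ^ 2 / 8) := hcombo
  -- Chernoff
  have hC := measure_ge_le_exp_mul_mgf (X := Y) (μ := P) t hlam hEint
  rw [mgf] at hC
  calc (P {ω | t ≤ Y ω}).toReal ≤ Real.exp (-lam * t) * ∫ ω, Real.exp (lam * Y ω) ∂P := hC
    _ ≤ Real.exp (-lam * t) * Real.exp (lam ^ 2 * (b - a) ^ 2 / 8) :=
        mul_le_mul_of_nonneg_left hmgf (Real.exp_pos _).le
    _ = Real.exp (-lam * t + lam ^ 2 * (b - a) ^ 2 / 8) := (Real.exp_add _ _).symm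

lemma tail_bernstein (Y : Ω → ℝ) (hY : Measurable Y) (M ν : ℝ)
    (hbdd : ∀ᵐ ω ∂P, |Y ω| ≤ M) (hmean : ∫ ω, Y ω ∂P = 0)
    (hsq : ∫ ω, (Y ω) ^ 2 ∂P = ν)
    (lam t : ℝ) (hlam : 0 ≤ lam) (hlM : lam * M < 3) :
    (P {ω | t ≤ Y ω}).toReal
      ≤ Real.exp (-lam * t + ν * lam ^ 2 / (2 * (1 - lam * M / 3))) := by
  have hden : 0 < 1 - lam * M / 3 := by linarith
  have hYint : Integrable Y P := by
    refine Integrable.mono' (integrable_const M) hY.aestronglyMeasurable ?_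
    filter_upwards [hbdd] with ω hω
    rwa [Real.norm_eq_abs]
  have hY2int : Integrable (fun ω => (Y ω) ^ 2) P := by
    refine Integrable.mono' (integrable_const (M ^ 2)) (hY.pow_const 2).aestronglyMeasurable ?_
    filter_upwards [hbdd] with ω hω
    rw [Real.norm_eq_abs, abs_pow]
    exact pow_le_pow_left₀ (abs_nonneg _) hω 2
  have hEint : Integrable (fun ω => Real.exp (lam * Y ω)) P := by
    refine Integrable.mono' (integrable_const (Real.exp (lam * M)))
      ((hY.const_mul lam).exp).aestronglyMeasurable ?_
    filter_upwards [hbdd] with ω hω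
    rw [Real.norm_eq_abs, abs_of_pos (Real.exp_pos _)]
    exact Real.exp_le_exp.2 (mul_le_mul_of_nonneg_left ((le_abs_self _).trans hω) hlam)
  set q : ℝ := lam ^ 2 / (2 * (1 - lam * M / 3)) with hqdef
  have hq0 : 0 ≤ q := by positivity
  have hpt : ∀ᵐ ω ∂P, Real.exp (lam * Y ω) ≤ 1 + lam * Y ω + q * (Y ω) ^ 2 := by
    filter_upwards [hbdd] with ω hω
    have h1 : |lam * Y ω| ≤ lam * M := by
      rw [abs_mul, abs_of_nonneg hlam]
      exact mul_le_mul_of_nonneg_left hω hlam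
    have h2 := exp_le_quad h1 hlM
    have h3 : (lam * Y ω) ^ 2 / (2 * (1 - lam * M / 3)) = q * (Y ω) ^ 2 := by
      rw [hqdef]; ring
    rw [h3] at h2
    exact h2
  have hmajInt : Integrable (fun ω => 1 + lam * Y ω + q * (Y ω) ^ 2) P :=
    ((integrable_const 1).add (hYint.const_mul lam)).add (hY2int.const_mul q)
  have hmgf : ∫ ω, Real.exp (lam * Y ω) ∂P ≤ Real.exp (ν * q) := by
    have hI := integral_mono_ae hEint hmajInt hpt
    have hIval : ∫ ω, (1 + lam * Y ω + q * (Y ω) ^ 2) ∂P = 1 + ν * q := by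
      have h1 : Integrable (fun ω => 1 + lam * Y ω) P := (integrable_const 1).add (hYint.const_mul lam)
      have h2 : Integrable (fun ω => q * (Y ω) ^ 2) P := hY2int.const_mul q
      rw [integral_add h1 h2, integral_add (integrable_const 1) (hYint.const_mul lam),
        integral_const_mul, integral_const_mul, hmean, hsq, integral_const]
      simp [measure_univ]
      ring
    rw [hIval] at hI
    calc ∫ ω, Real.exp (lam * Y ω) ∂P ≤ 1 + ν * q := hI
      _ ≤ Real.exp (ν * q) := by linarith [Real.add_one_le_exp (ν * q)]
  have hC := measure_ge_le_exp_mul_mgf (X := Y) (μ := P) t hlam hEint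
  rw [mgf] at hC
  calc (P {ω | t ≤ Y ω}).toReal ≤ Real.exp (-lam * t) * ∫ ω, Real.exp (lam * Y ω) ∂P := hC
    _ ≤ Real.exp (-lam * t) * Real.exp (ν * q) :=
        mul_le_mul_of_nonneg_left hmgf (Real.exp_pos _).le
    _ = Real.exp (-lam * t + ν * lam ^ 2 / (2 * (1 - lam * M / 3))) := by
        rw [← Real.exp_add, hqdef]
        ring_nf

end tails


/-- Per-example margin robustness certificate (Theorem `boxed_samplewise_pert`):
for a fixed example with clean margin `ρ(x,y)` and margin shift
`f(δx) = ρ(x+δx,y) - ρ(x,y)` bounded by `c` on a box `𝓑`, if the perturbation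
distribution `P_D` is dominated on `𝓑` by the uniform distribution `P_u`
(with constants `C, V_𝓑, ε_𝓑`), `μ_u, ν_u` are the mean and variance of the
margin shift under `P_u`, `φ ∈ (ε_𝓑, 1)`, `κ = ln(C V_𝓑/(φ - ε_𝓑))`,
`γ = (2/3) c κ`, `ξ_H = c √(2κ)`, `ξ_B = γ + √(γ² + 2κ ν_u)`, then
`ρ(x,y) > -μ_u + min{ξ_H, ξ_B}` implies `P_D(ρ(x+δx,y) > 0) ≥ 1 - φ`. -/
theorem boxed_samplewise_perturbation_certificate
    (n : ℕ) (l u : Fin n → ℝ) (hlu : ∀ i, l i < u i)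
    (𝓑 : Set (EuclideanSpace ℝ (Fin n)))
    (h𝓑 : 𝓑 = WithLp.ofLp ⁻¹' (Set.univ.pi fun i => Set.Icc (l i) (u i)))
    (V𝓑 : ℝ) (hV : V𝓑 = ∏ i, (u i - l i))
    (PD Pu : Measure (EuclideanSpace ℝ (Fin n)))
    [IsProbabilityMeasure PD]
    (hPu : Pu = (volume 𝓑)⁻¹ • volume.restrict 𝓑)
    (C : ℝ) (hC : 0 ≤ C) (ε𝓑 : ℝ) (hε : ε𝓑 ∈ Set.Ioo (0 : ℝ) 1)
    (hdom : ∀ A : Set (EuclideanSpace ℝ (Fin n)), MeasurableSet A →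
      PD (A ∩ 𝓑) ≤ ENNReal.ofReal (C * V𝓑) * Pu (A ∩ 𝓑))
    (hout : ∀ A : Set (EuclideanSpace ℝ (Fin n)), MeasurableSet A →
      PD (A ∩ 𝓑ᶜ) ≤ ENNReal.ofReal ε𝓑)
    (ρ : EuclideanSpace ℝ (Fin n) → ℝ) (hρmeas : Measurable ρ)
    (x : EuclideanSpace ℝ (Fin n))
    (c : ℝ) (hc : 0 < c)
    (hbdd : ∀ δx ∈ 𝓑, |ρ (x + δx) - ρ x| ≤ c)
    (μu : ℝ) (hμu : μu = ∫ δx, (ρ (x + δx) - ρ x) ∂Pu)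
    (νu : ℝ) (hνu : νu = variance (fun δx => ρ (x + δx) - ρ x) Pu)
    (φ : ℝ) (hφ : φ ∈ Set.Ioo ε𝓑 1)
    (κ : ℝ) (hκ : κ = Real.log (C * V𝓑 / (φ - ε𝓑)))
    (γ : ℝ) (hγ : γ = 2 / 3 * c * κ)
    (ξH : ℝ) (hξH : ξH = c * Real.sqrt (2 * κ))
    (ξB : ℝ) (hξB : ξB = γ + Real.sqrt (γ ^ 2 + 2 * κ * νu))
    (hmargin : -μu + min ξH ξB < ρ x) :
    1 - φ ≤ (PD {δx | 0 < ρ (x + δx)}).toReal := by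

  -- ## basic facts
  have hεpos : 0 < ε𝓑 := hε.1
  have hφε : 0 < φ - ε𝓑 := sub_pos.2 hφ.1
  have hφpos : 0 < φ := lt_trans hεpos hφ.1
  have hV0 : 0 < V𝓑 := by
    rw [hV]
    exact Finset.prod_pos fun i _ => sub_pos.2 (hlu i)
  have hmeas𝓑 : MeasurableSet 𝓑 := by
    rw [h𝓑]
    exact (MeasurableSet.univ_pi fun i => measurableSet_Icc).preimage (PiLp.volume_preserving_ofLp (Fin n)).measurable
  -- volume of the box
  have hvol : volume 𝓑 = ∏ i, ENNReal.ofReal (u i - l i) := by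
    rw [h𝓑]
    have hmp := EuclideanSpace.volume_preserving_symm_measurableEquiv_toLp (Fin n)
    have hpre : (MeasurableEquiv.toLp 2 (Fin n → ℝ)).symm ⁻¹'
        (Set.univ.pi fun i => Set.Icc (l i) (u i))
        = (WithLp.ofLp ⁻¹' (Set.univ.pi fun i => Set.Icc (l i) (u i)) :
            Set (EuclideanSpace ℝ (Fin n))) := rfl
    rw [← hpre, hmp.measure_preimage
      (MeasurableSet.univ_pi fun i => measurableSet_Icc).nullMeasurableSet]
    rw [volume_pi_pi]
    simp [Real.volume_Icc]
  have hvne : volume 𝓑 ≠ 0 := by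
    rw [hvol]
    rw [Finset.prod_ne_zero_iff]
    intro i _
    simp only [ne_eq, ENNReal.ofReal_eq_zero, not_le]
    linarith [hlu i]
  have hvtop : volume 𝓑 ≠ ⊤ := by
    rw [hvol]
    exact (ENNReal.prod_lt_top fun i _ => ENNReal.ofReal_lt_top).ne
  have hPuProb : IsProbabilityMeasure Pu := by
    constructor
    rw [hPu, Measure.smul_apply, Measure.restrict_apply_univ, smul_eq_mul,
      ENNReal.inv_mul_cancel hvne hvtop]
  -- the margin-shift function
  set g : EuclideanSpace ℝ (Fin n) → ℝ := fun δx => ρ (x + δx) - ρ x with hgdef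
  have hg : Measurable g := (hρmeas.comp (measurable_const_add x)).sub measurable_const
  have hae𝓑 : ∀ᵐ δx ∂Pu, δx ∈ 𝓑 := by
    rw [hPu]
    exact Measure.ae_smul_measure (ae_restrict_mem hmeas𝓑) _
  have hgb : ∀ᵐ δx ∂Pu, |g δx| ≤ c := by
    filter_upwards [hae𝓑] with δx h using hbdd δx h
  have hgint : Integrable g Pu := by
    refine Integrable.mono' (integrable_const c) hg.aestronglyMeasurable ?_
    filter_upwards [hgb] with δx h
    rwa [Real.norm_eq_abs]
  have hμc : |μu| ≤ c := by
    rw [hμu]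
    calc |∫ δx, g δx ∂Pu| ≤ ∫ δx, |g δx| ∂Pu := by
          simpa [Real.norm_eq_abs] using norm_integral_le_integral_norm (μ := Pu) g
      _ ≤ ∫ _δx, c ∂Pu := integral_mono_ae hgint.abs (integrable_const c) hgb
      _ = c := by simp [measure_univ]
  set Y : EuclideanSpace ℝ (Fin n) → ℝ := fun δx => μu - g δx with hYdef
  have hYmeas : Measurable Y := measurable_const.sub hg
  have hYmean : ∫ δx, Y δx ∂Pu = 0 := by
    rw [hYdef]
    simp only []
    rw [integral_sub (integrable_const μu) hgint, integral_const, ← hμu]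
    simp [measure_univ]
  have hg2int : Integrable (fun δx => g δx ^ 2) Pu := by
    refine Integrable.mono' (integrable_const (c ^ 2)) (hg.pow_const 2).aestronglyMeasurable ?_
    filter_upwards [hgb] with δx h
    rw [Real.norm_eq_abs, abs_pow]
    exact pow_le_pow_left₀ (abs_nonneg _) h 2
  have hmem : MemLp g 2 Pu := by
    refine MemLp.of_bound hg.aestronglyMeasurable c ?_
    filter_upwards [hgb] with δx h
    rwa [Real.norm_eq_abs]
  have hvar : νu = ∫ δx, g δx ^ 2 ∂Pu - μu ^ 2 := by
    rw [hνu, variance_eq_sub hmem, hμu]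
    congr 1
  have hYsq : ∫ δx, Y δx ^ 2 ∂Pu = νu := by
    have hexp : ∀ δx, Y δx ^ 2 = g δx ^ 2 - 2 * μu * g δx + μu ^ 2 := by
      intro δx
      rw [hYdef]
      ring
    rw [integral_congr_ae (Filter.Eventually.of_forall hexp)]
    have hi1 : Integrable (fun δx => g δx ^ 2 - 2 * μu * g δx) Pu :=
      hg2int.sub (hgint.const_mul (2 * μu))
    rw [integral_add hi1 (integrable_const (μu ^ 2)),
      integral_sub hg2int (hgint.const_mul (2 * μu)), integral_const_mul, ← hμu, integral_const]
    simp [measure_univ]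
    rw [hvar]
    ring
  have hYb : ∀ᵐ δx ∂Pu, |Y δx| ≤ 2 * c := by
    filter_upwards [hgb] with δx h
    rw [hYdef]
    simp only []
    calc |μu - g δx| ≤ |μu| + |g δx| := abs_sub _ _
      _ ≤ 2 * c := by linarith
  -- ## reduce to bounding PD of the bad event
  set A : Set (EuclideanSpace ℝ (Fin n)) := {δx | ρ (x + δx) ≤ 0} with hAdef
  have hAmeas : MeasurableSet A :=
    measurableSet_le (hρmeas.comp (measurable_const_add x)) measurable_const
  have hScompl : {δx : EuclideanSpace ℝ (Fin n) | 0 < ρ (x + δx)} = Aᶜ := by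
    ext δx
    simp [hAdef, not_le]
  suffices hPDA : PD A ≤ ENNReal.ofReal φ by
    rw [hScompl, prob_compl_eq_one_sub hAmeas,
      ENNReal.toReal_sub_of_le prob_le_one ENNReal.one_ne_top]
    have : (PD A).toReal ≤ φ :=
      ENNReal.toReal_le_of_le_ofReal hφpos.le hPDA
    rw [ENNReal.toReal_one]
    linarith
  -- split over the box
  have hsplit : PD A ≤ PD (A ∩ 𝓑) + PD (A ∩ 𝓑ᶜ) := by
    conv_lhs => rw [← Set.inter_union_compl A 𝓑]
    exact measure_union_le _ _
  suffices hkey : ENNReal.ofReal (C * V𝓑) * Pu (A ∩ 𝓑) ≤ ENNReal.ofReal (φ - ε𝓑) by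
    calc PD A ≤ PD (A ∩ 𝓑) + PD (A ∩ 𝓑ᶜ) := hsplit
      _ ≤ ENNReal.ofReal (C * V𝓑) * Pu (A ∩ 𝓑) + ENNReal.ofReal ε𝓑 :=
          add_le_add (hdom A hAmeas) (hout A hAmeas)
      _ ≤ ENNReal.ofReal (φ - ε𝓑) + ENNReal.ofReal ε𝓑 := add_le_add_left hkey _
      _ = ENNReal.ofReal φ := by
          rw [← ENNReal.ofReal_add (le_of_lt hφε) hεpos.le]
          ring_nf
  rcases eq_or_lt_of_le (mul_nonneg hC hV0.le) with hCV0 | hCVpos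
  · rw [← hCV0]
    simp
  -- now C*V𝓑 > 0
  by_cases hκ0 : κ ≤ 0
  · -- trivial regime
    have hratio : C * V𝓑 ≤ φ - ε𝓑 := by
      by_contra hcon
      push_neg at hcon
      have h1 : 1 < C * V𝓑 / (φ - ε𝓑) := (one_lt_div hφε).2 hcon
      have := Real.log_pos h1
      rw [← hκ] at this
      linarith
    calc ENNReal.ofReal (C * V𝓑) * Pu (A ∩ 𝓑) ≤ ENNReal.ofReal (C * V𝓑) * 1 :=
          mul_le_mul_right prob_le_one _
      _ = ENNReal.ofReal (C * V𝓑) := mul_one _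
      _ ≤ ENNReal.ofReal (φ - ε𝓑) := ENNReal.ofReal_le_ofReal hratio
  · push_neg at hκ0
    have hexpκ : Real.exp (-κ) = (φ - ε𝓑) / (C * V𝓑) := by
      rw [hκ, Real.exp_neg, Real.exp_log (div_pos hCVpos hφε), inv_div]
    suffices hPuA : Pu A ≤ ENNReal.ofReal (Real.exp (-κ)) by
      calc ENNReal.ofReal (C * V𝓑) * Pu (A ∩ 𝓑)
          ≤ ENNReal.ofReal (C * V𝓑) * Pu A :=
            mul_le_mul_right (measure_mono Set.inter_subset_left) _
        _ ≤ ENNReal.ofReal (C * V𝓑) * ENNReal.ofReal (Real.exp (-κ)) :=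
            mul_le_mul_right hPuA _
        _ = ENNReal.ofReal (C * V𝓑 * Real.exp (-κ)) :=
            (ENNReal.ofReal_mul (by positivity)).symm
        _ = ENNReal.ofReal (φ - ε𝓑) := by
            rw [hexpκ]
            congr 1
            field_simp
            exact div_self (by rintro rfl; simp at hCVpos)
    -- ## tail bound under Pu
    set t : ℝ := μu + ρ x with htdef
    have hAsub : A ⊆ {δx | t ≤ Y δx} := by
      intro δx hδx
      simp only [hAdef, Set.mem_setOf_eq] at hδx ⊢
      rw [hYdef, hgdef, htdef]
      simp only []
      linarith
    have hν0 : 0 ≤ νu := by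
      rw [hνu]
      exact variance_nonneg _ _
    have hγpos : 0 < γ := by
      rw [hγ]
      positivity
    have hκν : 0 ≤ γ ^ 2 + 2 * κ * νu := by positivity
    have hξBpos : 0 < ξB := by
      rw [hξB]
      have := Real.sqrt_nonneg (γ ^ 2 + 2 * κ * νu)
      linarith
    have hξHpos : 0 < ξH := by
      rw [hξH]
      have h2κ : 0 < Real.sqrt (2 * κ) := Real.sqrt_pos.2 (by linarith)
      positivity
    have ht : min ξH ξB < t := by
      rw [htdef]
      linarith [hmargin]
    have hAfin : Pu A ≠ ⊤ := measure_ne_top _ _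
    have hmono : Pu A ≤ Pu {δx | t ≤ Y δx} := measure_mono hAsub
    suffices htail : (Pu {δx | t ≤ Y δx}).toReal ≤ Real.exp (-κ) by
      refine le_trans hmono ?_
      rw [ENNReal.le_ofReal_iff_toReal_le (measure_ne_top _ _) (Real.exp_pos _).le]
      exact htail
    rcases le_or_gt ξH ξB with hmin | hmin
    · -- Hoeffding case
      have hmineq : min ξH ξB = ξH := min_eq_left hmin
      have htH : ξH ≤ t := by rw [hmineq] at ht; linarith
      have hYIcc : ∀ᵐ δx ∂Pu, Y δx ∈ Set.Icc (μu - c) (μu + c) := by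
        filter_upwards [hgb] with δx h
        have h' := abs_le.1 h
        rw [hYdef]
        constructor
        · simp only []
          linarith [h'.2]
        · simp only []
          linarith [h'.1]
      have hc2 : (0:ℝ) < c ^ 2 := by positivity
      have hlam0 : 0 ≤ ξH / c ^ 2 := by positivity
      have htail0 := tail_hoeffding Pu Y hYmeas (μu - c) (μu + c) (by linarith) hYIcc hYmean
        (ξH / c ^ 2) t hlam0
      refine le_trans htail0 (Real.exp_le_exp.2 ?_)
      have hξHsq : ξH ^ 2 = 2 * κ * c ^ 2 := by
        rw [hξH, mul_pow, Real.sq_sqrt (by linarith : (0:ℝ) ≤ 2 * κ)]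
        ring
      have h2 : ξH * ξH ≤ ξH * t := mul_le_mul_of_nonneg_left htH hξHpos.le
      have h3 : -(ξH / c ^ 2) * t + (ξH / c ^ 2) ^ 2 * ((μu + c) - (μu - c)) ^ 2 / 8
          = (-(ξH * t) + ξH ^ 2 / 2) / c ^ 2 := by
        field_simp
        ring
      rw [h3, div_le_iff₀ hc2]
      nlinarith [hξHsq, h2]
    · -- Bernstein case
      have hmineq : min ξH ξB = ξB := min_eq_right hmin.le
      have htB : ξB ≤ t := by rw [hmineq] at ht; linarith
      have hξBsq : ξB ^ 2 = 2 * κ * νu + 4 / 3 * c * κ * ξB := by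
        have hs : Real.sqrt (γ ^ 2 + 2 * κ * νu) ^ 2 = γ ^ 2 + 2 * κ * νu :=
          Real.sq_sqrt hκν
        rw [hξB]
        linear_combination hs + 2 * (γ + Real.sqrt (γ ^ 2 + 2 * κ * νu)) * hγ
      rcases eq_or_lt_of_le hν0 with hveq | hvpos
      · -- degenerate variance
        have hξB2γ : ξB = 4 / 3 * c * κ := by
          rw [hξB, ← hveq, mul_zero, add_zero, Real.sqrt_sq hγpos.le, hγ]
          ring
        have hlM : (3 / (4 * c)) * (2 * c) < 3 := by
          rw [show (3 / (4 * c)) * (2 * c) = 3 / 2 by field_simp; ring]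
          norm_num
        have htail0 := tail_bernstein Pu Y hYmeas (2 * c) νu hYb hYmean hYsq
          (3 / (4 * c)) t (by positivity) hlM
        refine le_trans htail0 (Real.exp_le_exp.2 ?_)
        rw [← hveq]
        rw [zero_mul, zero_div, add_zero]
        have h4 : (3 / (4 * c)) * (4 / 3 * c * κ) = κ := by
          field_simp
        have h5 : (3 / (4 * c)) * ξB ≤ (3 / (4 * c)) * t :=
          mul_le_mul_of_nonneg_left htB (by positivity)
        rw [hξB2γ] at h5
        rw [h4] at h5
        linarith
      · -- positive variance
        have hdenpos : 0 < νu + 2 / 3 * c * ξB := by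
          have : 0 < 2 / 3 * c * ξB := by positivity
          linarith
        set lam : ℝ := ξB / (νu + 2 / 3 * c * ξB) with hlamdef
        have hlam0 : 0 ≤ lam := div_nonneg hξBpos.le hdenpos.le
        have hlM : lam * (2 * c) < 3 := by
          rw [hlamdef, div_mul_eq_mul_div, div_lt_iff₀ hdenpos]
          nlinarith [hvpos, mul_pos hc hξBpos]
        have htail0 := tail_bernstein Pu Y hYmeas (2 * c) νu hYb hYmean hYsq
          lam t hlam0 hlM
        refine le_trans htail0 (Real.exp_le_exp.2 ?_)
        have h3 : ξB ^ 2 = 2 * κ * (νu + 2 / 3 * c * ξB) := by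
          linear_combination hξBsq
        have h4 : lam * ξB = 2 * κ := by
          rw [hlamdef, div_mul_eq_mul_div, div_eq_iff hdenpos.ne']
          linear_combination h3
        have h5 : lam * ξB ≤ lam * t := mul_le_mul_of_nonneg_left htB hlam0
        have h6 : νu * lam ^ 2 / (2 * (1 - lam * (2 * c) / 3)) = κ := by
          rw [hlamdef]
          rw [show 1 - ξB / (νu + 2 / 3 * c * ξB) * (2 * c) / 3
              = νu / (νu + 2 / 3 * c * ξB) by field_simp; ring]
          rw [show νu * (ξB / (νu + 2 / 3 * c * ξB)) ^ 2 / (2 * (νu / (νu + 2 / 3 * c * ξB)))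
              = ξB ^ 2 / (2 * (νu + 2 / 3 * c * ξB)) by field_simp]
          rw [h3]
          field_simp
        rw [h6]
        rw [h4] at h5
        linarith
end
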